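/- Let A, B, C, D, Ã, B̃, C̃, D̃ be n×n complex matrices. Then the following are equivalent: (a) ÃA + C̃C = B̃B + D̃D, ÃB + C̃D = 0, and B̃A + D̃C = 0; (b) for every complex number u: (Ã − u·B̃)·(u·A + B) + (C̃ − u·D̃)·(u·C + D) = 0. Moreover, when these conditions hold, for every u ∈ ℂ such that Ã − u·B̃ and u·C + D are invertible one has −(Ã − u·B̃)⁻¹·(C̃ − u·D̃) = (u·A + B)·(u·C + D)⁻¹. -/
import Mathlib

open Matrix

theorem stmt9 {n : ℕ} (A B C D At Bt Ct Dt : Matrix (Fin n) (Fin n) ℂ) :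
    ((At * A + Ct * C = Bt * B + Dt * D ∧ At * B + Ct * D = 0 ∧ Bt * A + Dt * C = 0) ↔
      ∀ u : ℂ, (At - u • Bt) * (u • A + B) + (Ct - u • Dt) * (u • C + D) = 0) ∧
    ((At * A + Ct * C = Bt * B + Dt * D ∧ At * B + Ct * D = 0 ∧ Bt * A + Dt * C = 0) →
      ∀ u : ℂ, IsUnit (At - u • Bt) → IsUnit (u • C + D) →
        -((At - u • Bt)⁻¹ * (Ct - u • Dt)) = (u • A + B) * (u • C + D)⁻¹) := by
  have expand : ∀ u : ℂ, (At - u • Bt) * (u • A + B) + (Ct - u • Dt) * (u • C + D) =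
      u • (At * A + Ct * C) + (At * B + Ct * D) - (u * u) • (Bt * A + Dt * C)
        - u • (Bt * B + Dt * D) := by
    intro u
    simp only [sub_mul, mul_add, Matrix.smul_mul, Matrix.mul_smul, smul_add, smul_sub, smul_smul]
    module
  have main : (At * A + Ct * C = Bt * B + Dt * D ∧ At * B + Ct * D = 0 ∧ Bt * A + Dt * C = 0) ↔
      ∀ u : ℂ, (At - u • Bt) * (u • A + B) + (Ct - u • Dt) * (u • C + D) = 0 := by
    constructor
    · rintro ⟨h1, h2, h3⟩ u
      rw [expand, h1, h2, h3]
      module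
    · intro h
      have h0 := h 0
      rw [expand] at h0
      simp only [zero_smul, mul_zero, sub_zero, zero_add] at h0
      have e1 := h 1
      have e2 := h (-1)
      rw [expand] at e1 e2
      have hZ : Bt * A + Dt * C = 0 := by
        linear_combination (norm := module) (-(1:ℂ)/2 : ℂ) • e1 + (-(1:ℂ)/2 : ℂ) • e2 + h0
      have hX : At * A + Ct * C = Bt * B + Dt * D := by
        linear_combination (norm := module) ((1:ℂ)/2 : ℂ) • e1 - ((1:ℂ)/2 : ℂ) • e2
      exact ⟨hX, h0, hZ⟩
  refine ⟨main, fun h u hu1 hu2 => ?_⟩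
  have hall := main.mp h u
  have key : (At - u • Bt) * (u • A + B) = -((Ct - u • Dt) * (u • C + D)) :=
    eq_neg_of_add_eq_zero_left hall
  have hd1 : IsUnit (At - u • Bt).det := (Matrix.isUnit_iff_isUnit_det _).mp hu1
  have hd2 : IsUnit (u • C + D).det := (Matrix.isUnit_iff_isUnit_det _).mp hu2
  have step : (At - u • Bt) * ((u • A + B) * (u • C + D)⁻¹) = -(Ct - u • Dt) := by
    rw [← Matrix.mul_assoc, key]
    rw [Matrix.neg_mul, Matrix.mul_nonsing_inv_cancel_right _ _ hd2]
  calc -((At - u • Bt)⁻¹ * (Ct - u • Dt))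
      = (At - u • Bt)⁻¹ * -(Ct - u • Dt) := by rw [Matrix.mul_neg]
    _ = (At - u • Bt)⁻¹ * ((At - u • Bt) * ((u • A + B) * (u • C + D)⁻¹)) := by rw [step]
    _ = (u • A + B) * (u • C + D)⁻¹ := by rw [Matrix.nonsing_inv_mul_cancel_left _ _ hd1]
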